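/- (Green's theorem, first form, scalar part) For every superpolynomial R ∈ 𝒫, ∫_SS (𝔼 R) = −∫_SB (Δ R). -/

import Mathlib

set_option synthInstance.maxHeartbeats 1000000
set_option maxHeartbeats 1000000

open scoped TensorProduct

noncomputable section

namespace Super

/-- The algebra of ordinary polynomials in `m` commuting variables. -/
abbrev Poly (m : ℕ) := MvPolynomial (Fin m) ℝ

/-- The Grassmann algebra on `2n` anticommuting generators. -/
abbrev Grass (n : ℕ) := ExteriorAlgebra ℝ (Fin (2 * n) → ℝ)

/-- The algebra `𝒫` of superpolynomials. -/
abbrev P (m n : ℕ) := Poly m ⊗[ℝ] Grass n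

variable (m n : ℕ)

/-- The anticommuting generator `x̀_j` (0-indexed). -/
def gg (j : Fin (2 * n)) : Grass n := ExteriorAlgebra.ι ℝ (Pi.single j 1)

/-- The odd derivation `∂_{x̀_j}` on the Grassmann algebra: contraction with the
`j`-th dual basis vector. -/
def gd (j : Fin (2 * n)) : Module.End ℝ (Grass n) :=
  CliffordAlgebra.contractLeft (LinearMap.proj j)

def idx0 (j : Fin n) : Fin (2 * n) := ⟨2 * j.val, by have := j.isLt; omega⟩
def idx1 (j : Fin n) : Fin (2 * n) := ⟨2 * j.val + 1, by have := j.isLt; omega⟩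

/-- `∂_{x_i}` acting on superpolynomials. -/
def dx (i : Fin m) : Module.End ℝ (P m n) :=
  TensorProduct.map (MvPolynomial.pderiv i).toLinearMap LinearMap.id

/-- `∂_{x̀_j}` acting on superpolynomials. -/
def dg (j : Fin (2 * n)) : Module.End ℝ (P m n) :=
  TensorProduct.map LinearMap.id (gd n j)

/-- multiplication by `x_i`. -/
def mulX (i : Fin m) : Module.End ℝ (P m n) :=
  LinearMap.mulLeft ℝ ((MvPolynomial.X i : Poly m) ⊗ₜ (1 : Grass n))

/-- multiplication by `x̀_j`. -/
def mulG (j : Fin (2 * n)) : Module.End ℝ (P m n) :=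
  LinearMap.mulLeft ℝ ((1 : Poly m) ⊗ₜ gg n j)

/-- The super-Laplace operator
`Δ = 4 ∑_{j=1}^n ∂_{x̀_{2j-1}} ∂_{x̀_{2j}} - ∑_{i=1}^m ∂_{x_i}²` (written 0-indexed). -/
def Delta : Module.End ℝ (P m n) :=
  4 • (∑ j : Fin n, dg m n (idx0 n j) ∘ₗ dg m n (idx1 n j)) -
    ∑ i : Fin m, dx m n i ∘ₗ dx m n i

/-- The super-Euler operator `𝔼 = ∑ x_i ∂_{x_i} + ∑ x̀_j ∂_{x̀_j}`. -/
def Euler : Module.End ℝ (P m n) :=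
  ∑ i : Fin m, mulX m n i ∘ₗ dx m n i + ∑ j : Fin (2 * n), mulG m n j ∘ₗ dg m n j

/-- The even element `x² = ∑_{j=1}^n x̀_{2j-1} x̀_{2j} - ∑_{i=1}^m x_i²`. -/
def xsq : P m n :=
  (1 : Poly m) ⊗ₜ (∑ j : Fin n, gg n (idx0 n j) * gg n (idx1 n j)) -
    ∑ i : Fin m, (MvPolynomial.X i * MvPolynomial.X i : Poly m) ⊗ₜ (1 : Grass n)

/-- The superdimension `M = m - 2n`. -/
def Mdim : ℤ := (m : ℤ) - 2 * n

/-- Evaluation at the origin: the constant term of a superpolynomial. -/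
def eval0 : P m n →ₗ[ℝ] ℝ :=
  (TensorProduct.lid ℝ ℝ).toLinearMap ∘ₗ
    TensorProduct.map (MvPolynomial.aeval (fun _ : Fin m => (0 : ℝ))).toLinearMap
      (ExteriorAlgebra.algebraMapInv).toLinearMap

/-- `𝒫_k`, the space of homogeneous superpolynomials of degree `k`
(the eigenspace of `𝔼` with eigenvalue `k`). -/
def Pk (k : ℕ) : Submodule ℝ (P m n) :=
  LinearMap.ker (Euler m n - (k : ℝ) • LinearMap.id)

/-- `ℋ_k`, the space of spherical harmonics of degree `k`. -/
def Hk (k : ℕ) : Submodule ℝ (P m n) :=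
  Pk m n k ⊓ LinearMap.ker (Delta m n)

/-- The integral over the supersphere (Pizzetti formula with `m` replaced by `M`).
Terms where `k + M/2` is a pole of `Γ` vanish automatically since `Real.Gamma`
is zero at nonpositive integers. -/
def SS (R : P m n) : ℝ :=
  ∑' k : ℕ, (-1 : ℝ) ^ k * (2 * Real.pi ^ ((Mdim m n : ℝ) / 2)) /
      (4 ^ k * k.factorial * Real.Gamma ((k : ℝ) + (Mdim m n : ℝ) / 2)) *
    eval0 m n ((Delta m n ^ k) R)

/-- The integral over the superball. -/
def SB (R : P m n) : ℝ :=
  ∑' k : ℕ, (-1 : ℝ) ^ k * Real.pi ^ ((Mdim m n : ℝ) / 2) /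
      (4 ^ k * k.factorial * Real.Gamma ((k : ℝ) + (Mdim m n : ℝ) / 2 + 1)) *
    eval0 m n ((Delta m n ^ k) R)

/-- The super Laplace–Beltrami operator `Δ_LB = x²Δ - 𝔼(M - 2 + 𝔼)`. -/
def DeltaLB : Module.End ℝ (P m n) :=
  LinearMap.mulLeft ℝ (xsq m n) ∘ₗ Delta m n -
    Euler m n ∘ₗ (((Mdim m n : ℝ) - 2) • LinearMap.id + Euler m n)

end Super

set_option linter.unusedSectionVars false

namespace GreenAux

variable {R : Type*} [Ring R] [Algebra ℝ R]

lemma triple_DX {D X : R} {e : ℝ} (h : D * X = X * D + e • 1) (w : R) :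
    D * (X * w) = X * (D * w) + e • w := by
  rw [← mul_assoc, h, add_mul, mul_assoc, smul_mul_assoc, one_mul]

lemma triple_DG {D G : R} {e : ℝ} (h : D * G = e • 1 - G * D) (w : R) :
    D * (G * w) = e • w - G * (D * w) := by
  rw [← mul_assoc, h, sub_mul, mul_assoc, smul_mul_assoc, one_mul]

lemma triple_DD {D D' : R} (h : D * D' = -(D' * D)) (w : R) :
    D * (D' * w) = -(D' * (D * w)) := by
  rw [← mul_assoc, h, neg_mul, mul_assoc]

/-- Abstract commutator `[∑ D_i², ∑ X_k D_k] = 2 ∑ D_i²`. -/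
lemma comm_B {ι : Type*} [Fintype ι] [DecidableEq ι] (D X : ι → R)
    (hDX : ∀ i k, D i * X k = X k * D i + (if i = k then (1:ℝ) else 0) • 1)
    (hDD : ∀ i k, D i * D k = D k * D i) :
    (∑ i, D i * D i) * (∑ k, X k * D k) =
      (∑ k, X k * D k) * (∑ i, D i * D i) + (2:ℝ) • ∑ i, D i * D i := by
  have key : ∀ i k, (D i * D i) * (X k * D k) =
      (X k * D k) * (D i * D i) + (if i = k then (2:ℝ) • (D i * D i) else 0) := by
    intro i k
    rw [mul_assoc (D i), triple_DX (hDX i k), mul_add, mul_smul_comm,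
      triple_DX (hDX i k)]
    have hc : D i * (D i * D k) = D k * (D i * D i) := by
      rw [hDD i k, ← mul_assoc, hDD i k, mul_assoc]
    rw [hc, ← mul_assoc (X k), add_assoc]
    congr 1
    by_cases h : i = k
    · subst h
      simp [two_smul]
    · simp [h]
  have expand : (∑ i, D i * D i) * (∑ k, X k * D k)
      = ∑ i, ∑ k, (D i * D i) * (X k * D k) := by
    rw [Finset.sum_mul]; exact Finset.sum_congr rfl fun i _ => Finset.mul_sum _ _ _
  rw [expand]
  have step : ∀ i : ι, ∑ k, (D i * D i) * (X k * D k)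
      = (∑ k, X k * D k) * (D i * D i) + (2:ℝ) • (D i * D i) := by
    intro i
    rw [Finset.sum_congr rfl fun k _ => key i k, Finset.sum_add_distrib,
      Finset.sum_ite_eq Finset.univ i, if_pos (Finset.mem_univ i), ← Finset.sum_mul]
  rw [Finset.sum_congr rfl fun i _ => step i, Finset.sum_add_distrib,
    ← Finset.mul_sum, ← Finset.smul_sum]

/-- Abstract commutator `[∑ D_{a j} D_{b j}, ∑ G_k D_k] = 2 ∑ D_{a j} D_{b j}`. -/
lemma comm_A {ι κ : Type*} [Fintype ι] [DecidableEq ι] [Fintype κ] (D G : ι → R)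
    (a b : κ → ι) (hab : ∀ j, a j ≠ b j)
    (hDG : ∀ i k, D i * G k = (if i = k then (1:ℝ) else 0) • 1 - G k * D i)
    (hDD : ∀ i k, D i * D k = -(D k * D i)) :
    (∑ j, D (a j) * D (b j)) * (∑ k, G k * D k) =
      (∑ k, G k * D k) * (∑ j, D (a j) * D (b j)) + (2:ℝ) • ∑ j, D (a j) * D (b j) := by
  have key : ∀ (u v : ι), u ≠ v → ∀ k, (D u * D v) * (G k * D k) =
      (G k * D k) * (D u * D v) +
        ((if u = k then (1:ℝ) else 0) + (if v = k then (1:ℝ) else 0)) • (D u * D v) := by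
    intro u v huv k
    have h3 : D u * (D v * D k) = D k * (D u * D v) := by
      rw [hDD v k, mul_neg, triple_DD (hDD u k), neg_neg]
    rw [mul_assoc (D u), triple_DG (hDG v k), mul_sub, mul_smul_comm,
      triple_DG (hDG u k), h3, ← mul_assoc (G k)]
    by_cases huk : u = k
    · subst huk
      have hvk : ¬ v = u := fun h => huv h.symm
      rw [if_pos rfl, if_neg hvk, hDD v u]
      simp only [one_smul, zero_smul, zero_sub, add_zero, zero_add, smul_neg, neg_neg,
        sub_neg_eq_add]
      abel
    · by_cases hvk : v = k
      · subst hvk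
        simp only [if_pos rfl, if_neg huk, one_smul, zero_smul, smul_zero, sub_zero, add_zero,
          zero_add]
        abel
      · simp [huk, hvk]
  have expand : (∑ j, D (a j) * D (b j)) * (∑ k, G k * D k)
      = ∑ j, ∑ k, (D (a j) * D (b j)) * (G k * D k) := by
    rw [Finset.sum_mul]; exact Finset.sum_congr rfl fun j _ => Finset.mul_sum _ _ _
  rw [expand]
  have step : ∀ j : κ, ∑ k, (D (a j) * D (b j)) * (G k * D k)
      = (∑ k, G k * D k) * (D (a j) * D (b j)) + (2:ℝ) • (D (a j) * D (b j)) := by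
    intro j
    rw [Finset.sum_congr rfl fun k _ => key _ _ (hab j) k, Finset.sum_add_distrib,
      ← Finset.sum_mul, ← Finset.sum_smul, Finset.sum_add_distrib,
      Finset.sum_ite_eq Finset.univ (a j), Finset.sum_ite_eq Finset.univ (b j)]
    norm_num
  rw [Finset.sum_congr rfl fun j _ => step j, Finset.sum_add_distrib,
    ← Finset.mul_sum, ← Finset.smul_sum]

open Super TensorProduct LinearMap MvPolynomial
variable (m n : ℕ)

lemma gd_gg_apply (j k : Fin (2*n)) (x : Grass n) :
    gd n j (gg n k * x) = (if j = k then (1:ℝ) else 0) • x - gg n k * gd n j x := by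
  rw [gd, gg, CliffordAlgebra.contractLeft_ι_mul]
  congr 1
  simp [Pi.single_apply]

lemma gd_gd_op (j k : Fin (2*n)) : gd n j * gd n k = -(gd n k * gd n j) := by
  refine LinearMap.ext fun x => ?_
  simp only [mul_apply, LinearMap.neg_apply]
  exact CliffordAlgebra.contractLeft_comm _ _ x

lemma pderiv_comm (i k : Fin m) (p : Poly m) :
    pderiv i (pderiv k p) = pderiv k (pderiv i p) := by
  induction p using MvPolynomial.induction_on with
  | C a => simp
  | add p q hp hq => simp [hp, hq]
  | mul_X p j hp =>
      simp only [pderiv_mul, map_add, pderiv_X, Pi.single_apply, apply_ite (pderiv i),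
        apply_ite (pderiv k), pderiv_one, map_zero, hp, ite_self]
      ring

-- End-level relations
lemma dx_mulX (i k : Fin m) :
    dx m n i * mulX m n k = mulX m n k * dx m n i + (if i = k then (1:ℝ) else 0) • 1 := by
  apply TensorProduct.ext'
  intro p g
  simp only [mul_apply, LinearMap.add_apply, LinearMap.smul_apply, one_apply, dx, mulX, mulLeft_apply,
    Algebra.TensorProduct.tmul_mul_tmul, map_tmul, AlgHom.toLinearMap_apply, id_coe, id_eq,
    LinearMap.coe_mk, one_mul, MvPolynomial.pderiv_mul, pderiv_X, Pi.single_apply]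
  by_cases h : i = k <;>
    simp [h, add_tmul, add_comm, TensorProduct.smul_tmul']

lemma dx_dx (i k : Fin m) : dx m n i * dx m n k = dx m n k * dx m n i := by
  apply TensorProduct.ext'
  intro p g
  simp [dx, pderiv_comm]

lemma dg_mulG (j k : Fin (2*n)) :
    dg m n j * mulG m n k = (if j = k then (1:ℝ) else 0) • 1 - mulG m n k * dg m n j := by
  apply TensorProduct.ext'
  intro p g
  simp only [mul_apply, LinearMap.sub_apply, LinearMap.smul_apply, one_apply, dg, mulG, mulLeft_apply,
    Algebra.TensorProduct.tmul_mul_tmul, map_tmul, id_coe, id_eq, one_mul, gd_gg_apply]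
  by_cases h : j = k <;> simp [h, gd_gg_apply, tmul_sub, tmul_neg, TensorProduct.tmul_smul]

lemma dg_dg (j k : Fin (2*n)) : dg m n j * dg m n k = -(dg m n k * dg m n j) := by
  apply TensorProduct.ext'
  intro p g
  have := CliffordAlgebra.contractLeft_comm (d := LinearMap.proj j) (d' := LinearMap.proj k) g
  simp [dg, gd, this, tmul_neg]

lemma dg_dg_self (j : Fin (2*n)) : dg m n j * dg m n j = 0 := by
  have h := dg_dg m n j j
  have h2 : (2 : ℝ) • (dg m n j * dg m n j) = 0 := by
    rw [two_smul]
    nth_rewrite 2 [h]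
    abel
  exact (smul_eq_zero.mp h2).resolve_left two_ne_zero

lemma dx_mulG (i : Fin m) (j : Fin (2*n)) :
    dx m n i * mulG m n j = mulG m n j * dx m n i := by
  apply TensorProduct.ext'
  intro p g
  simp [dx, mulG, Algebra.TensorProduct.tmul_mul_tmul]

lemma dx_dg (i : Fin m) (j : Fin (2*n)) :
    dx m n i * dg m n j = dg m n j * dx m n i := by
  apply TensorProduct.ext'
  intro p g
  simp [dx, dg]

lemma mulX_dg (i : Fin m) (j : Fin (2*n)) :
    mulX m n i * dg m n j = dg m n j * mulX m n i := by
  apply TensorProduct.ext'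
  intro p g
  simp [dg, mulX, Algebra.TensorProduct.tmul_mul_tmul]


lemma idx_ne (j : Fin n) : idx0 n j ≠ idx1 n j := by
  intro h
  have := congrArg Fin.val h
  simp only [idx0, idx1] at this
  omega

lemma delta_eq : Delta m n =
    (4:ℝ) • (∑ j : Fin n, dg m n (idx0 n j) * dg m n (idx1 n j))
      - ∑ i : Fin m, dx m n i * dx m n i := by
  show (4:ℕ) • (∑ j : Fin n, dg m n (idx0 n j) * dg m n (idx1 n j))
      - ∑ i : Fin m, dx m n i * dx m n i = _
  rw [← Nat.cast_smul_eq_nsmul ℝ 4]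
  norm_num

lemma euler_eq : Euler m n =
    (∑ i : Fin m, mulX m n i * dx m n i) + ∑ j : Fin (2*n), mulG m n j * dg m n j := rfl

lemma esub_mul (a b c : Module.End ℝ (P m n)) : (a - b) * c = a * c - b * c := sub_mul a b c
lemma emul_sub (a b c : Module.End ℝ (P m n)) : a * (b - c) = a * b - a * c := mul_sub a b c
lemma esmul_mul (r : ℝ) (a b : Module.End ℝ (P m n)) : (r • a) * b = r • (a * b) :=
  smul_mul_assoc r a b
lemma emul_smul (r : ℝ) (a b : Module.End ℝ (P m n)) : a * (r • b) = r • (a * b) :=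
  mul_smul_comm r a b
lemma esmul_sub (r : ℝ) (a b : Module.End ℝ (P m n)) : r • (a - b) = r • a - r • b :=
  smul_sub r a b
lemma esmul_add (r : ℝ) (a b : Module.End ℝ (P m n)) : r • (a + b) = r • a + r • b :=
  smul_add r a b

lemma delta_euler :
    Delta m n * Euler m n = Euler m n * Delta m n + (2:ℝ) • Delta m n := by
  have c1 : ∀ (j : Fin (2*n)) (i : Fin m), Commute (dg m n j) (mulX m n i) :=
    fun j i => (mulX_dg m n i j).symm
  have c2 : ∀ (j : Fin (2*n)) (i : Fin m), Commute (dg m n j) (dx m n i) :=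
    fun j i => (dx_dg m n i j).symm
  have c3 : ∀ (j : Fin (2*n)) (i : Fin m), Commute (mulG m n j) (dx m n i) :=
    fun j i => (dx_mulG m n i j).symm
  have hAEx : Commute (∑ j : Fin n, dg m n (idx0 n j) * dg m n (idx1 n j))
      (∑ i : Fin m, mulX m n i * dx m n i) :=
    Commute.sum_left _ _ _ fun j _ => Commute.sum_right _ _ _ fun i _ =>
      Commute.mul_left ((c1 _ i).mul_right (c2 _ i)) ((c1 _ i).mul_right (c2 _ i))
  have hBEg : Commute (∑ i : Fin m, dx m n i * dx m n i)
      (∑ j : Fin (2*n), mulG m n j * dg m n j) :=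
    Commute.sum_left _ _ _ fun i _ => Commute.sum_right _ _ _ fun j _ =>
      Commute.mul_left ((c3 j i).symm.mul_right (c2 j i).symm)
        ((c3 j i).symm.mul_right (c2 j i).symm)
  have hBEx := comm_B (dx m n) (mulX m n) (dx_mulX m n) (dx_dx m n)
  have hAEg := comm_A (dg m n) (mulG m n) (idx0 n) (idx1 n) (idx_ne n)
    (dg_mulG m n) (dg_dg m n)
  rw [delta_eq, euler_eq]
  set A := ∑ j : Fin n, dg m n (idx0 n j) * dg m n (idx1 n j) with hA
  set B := ∑ i : Fin m, dx m n i * dx m n i with hB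
  set Ex := ∑ i : Fin m, mulX m n i * dx m n i with hEx
  set Eg := ∑ j : Fin (2*n), mulG m n j * dg m n j with hEg
  simp only [esub_mul m n, emul_sub m n, esmul_mul m n, emul_smul m n, esmul_sub m n,
    esmul_add m n, mul_add, add_mul, smul_smul]
  rw [hAEx.eq, hAEg, hBEx, hBEg.eq]
  simp only [esmul_add m n, smul_smul]
  module

lemma delta_pow_euler (k : ℕ) :
    Delta m n ^ k * Euler m n
      = Euler m n * Delta m n ^ k + ((2 * k : ℝ)) • Delta m n ^ k := by
  induction k with
  | zero => simp
  | succ k ih =>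
      have hp : Delta m n ^ (k+1) = Delta m n ^ k * Delta m n := pow_succ _ _
      rw [hp, mul_assoc, delta_euler, mul_add, mul_smul_comm, ← mul_assoc, ih, add_mul,
        smul_mul_assoc, mul_assoc]
      push_cast
      module

lemma eval0_mulX (i : Fin m) : eval0 m n ∘ₗ mulX m n i = 0 := by
  apply TensorProduct.ext'
  intro p g
  simp [eval0, mulX, Algebra.TensorProduct.tmul_mul_tmul]

lemma eval0_mulG (j : Fin (2*n)) : eval0 m n ∘ₗ mulG m n j = 0 := by
  apply TensorProduct.ext'
  intro p g
  simp [eval0, mulG, Algebra.TensorProduct.tmul_mul_tmul, gg,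
    ExteriorAlgebra.algebraMapInv]

lemma eval0_euler (z : P m n) : eval0 m n (Euler m n z) = 0 := by
  have hX : ∀ (i : Fin m) (w : P m n), eval0 m n (mulX m n i w) = 0 := fun i w => by
    simpa using LinearMap.congr_fun (eval0_mulX m n i) w
  have hG : ∀ (j : Fin (2*n)) (w : P m n), eval0 m n (mulG m n j w) = 0 := fun j w => by
    simpa using LinearMap.congr_fun (eval0_mulG m n j) w
  rw [Euler]
  simp [LinearMap.sum_apply, map_sum, hX, hG]

lemma key_eval (k : ℕ) (R : P m n) :
    eval0 m n ((Delta m n ^ k) (Euler m n R))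
      = (2 * k : ℝ) * eval0 m n ((Delta m n ^ k) R) := by
  have h := LinearMap.congr_fun (delta_pow_euler m n k) R
  simp only [Module.End.mul_apply, LinearMap.add_apply, LinearMap.smul_apply] at h
  rw [h, map_add, map_smul, eval0_euler]
  simp [smul_eq_mul]

end GreenAux
/-- Green's theorem, first form, scalar part:
`∫_SS (𝔼 R) = -∫_SB (Δ R)` for every superpolynomial `R`. -/
theorem green_first_form (m n : ℕ) (R : Super.P m n) :
    Super.SS m n (Super.Euler m n R) = -Super.SB m n (Super.Delta m n R) := by
  classical
  unfold Super.SS Super.SB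
  rw [← tsum_neg]
  have hFG : ∀ j : ℕ,
      (-1:ℝ)^(j+1) * (2 * Real.pi ^ ((Super.Mdim m n : ℝ) / 2)) /
        (4^(j+1) * ((j+1).factorial : ℝ) *
          Real.Gamma (((j+1 : ℕ) : ℝ) + (Super.Mdim m n : ℝ) / 2)) *
        Super.eval0 m n ((Super.Delta m n ^ (j+1)) (Super.Euler m n R))
      = -((-1:ℝ)^j * Real.pi ^ ((Super.Mdim m n : ℝ) / 2) /
        (4^j * (j.factorial : ℝ) * Real.Gamma ((j : ℝ) + (Super.Mdim m n : ℝ) / 2 + 1)) *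
        Super.eval0 m n ((Super.Delta m n ^ j) (Super.Delta m n R))) := by
    intro j
    have hpow : (Super.Delta m n ^ j) (Super.Delta m n R)
        = (Super.Delta m n ^ (j+1)) R := by
      rw [pow_succ]; rfl
    have harg : (((j+1 : ℕ)) : ℝ) + (Super.Mdim m n : ℝ) / 2
        = (j : ℝ) + (Super.Mdim m n : ℝ) / 2 + 1 := by push_cast; ring
    rw [hpow, harg, GreenAux.key_eval m n (j+1) R]
    by_cases hG : Real.Gamma ((j : ℝ) + (Super.Mdim m n : ℝ) / 2 + 1) = 0
    · simp [hG]
    · have h4 : (4:ℝ)^(j+1) ≠ 0 := by positivity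
      have h4' : (4:ℝ)^j ≠ 0 := by positivity
      have hf : (((j+1).factorial : ℕ) : ℝ) ≠ 0 := Nat.cast_ne_zero.mpr (Nat.factorial_ne_zero _)
      have hf' : ((j.factorial : ℕ) : ℝ) ≠ 0 := Nat.cast_ne_zero.mpr (Nat.factorial_ne_zero _)
      have hD1 : (4:ℝ)^(j+1) * (((j+1).factorial : ℕ) : ℝ) *
          Real.Gamma ((j:ℝ) + (Super.Mdim m n : ℝ) / 2 + 1) ≠ 0 :=
        mul_ne_zero (mul_ne_zero h4 hf) hG
      have hD2 : (4:ℝ)^j * ((j.factorial : ℕ) : ℝ) *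
          Real.Gamma ((j:ℝ) + (Super.Mdim m n : ℝ) / 2 + 1) ≠ 0 :=
        mul_ne_zero (mul_ne_zero h4' hf') hG
      rw [div_mul_eq_mul_div, div_mul_eq_mul_div, ← neg_div, div_eq_div_iff hD1 hD2]
      have hfs : (((j+1).factorial : ℕ) : ℝ) = ((j:ℝ)+1) * ((j.factorial : ℕ) : ℝ) := by
        rw [Nat.factorial_succ]; push_cast; ring
      rw [hfs]
      push_cast
      ring
  refine tsum_eq_tsum_of_ne_zero_bij (fun x => x.1 + 1) ?_ ?_ ?_
  · intro x y hxy
    exact Subtype.ext (Nat.succ_injective hxy)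
  · intro k hk
    cases k with
    | zero =>
        exfalso
        apply hk
        have h0 : Super.eval0 m n ((Super.Delta m n ^ 0) (Super.Euler m n R)) = 0 := by
          rw [GreenAux.key_eval m n 0 R]; norm_num
        simp only [h0, mul_zero]
    | succ j =>
        exact ⟨⟨j, Function.mem_support.mpr (hFG j ▸ hk)⟩, rfl⟩
  · intro x
    exact hFG x.1
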